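/- Let K be a compact metric space and f : K → ℝ a bounded function lying in D(K). Then there is a countable ordinal α with osc_α f = osc_{α+1} f, and setting λ = ‖|f| + osc_α f‖_∞, u = (λ - osc_α f + f)/2, and v = (λ - osc_α f - f)/2, the functions u and v are nonnegative lower semicontinuous with f = u - v and ‖f‖_D = λ = ‖u + v‖_∞. -/

import Mathlib

open Filter Topology

section DKdefs
variable {K : Type*} [MetricSpace K] [CompactSpace K]

/-- A bounded lower semicontinuous real function. -/
def BddLSC (u : K → ℝ) : Prop := LowerSemicontinuous u ∧ ∃ M : ℝ, ∀ x, |u x| ≤ M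

/-- `f ∈ D(K)`: `f = (u₁ - u₂) + i(u₃ - u₄)` with the `uᵢ` bounded lower semicontinuous. -/
def MemDK (f : K → ℂ) : Prop :=
  ∃ u₁ u₂ u₃ u₄ : K → ℝ, BddLSC u₁ ∧ BddLSC u₂ ∧ BddLSC u₃ ∧ BddLSC u₄ ∧
    ∀ x, f x = ((u₁ x - u₂ x : ℝ) : ℂ) + Complex.I * ((u₃ x - u₄ x : ℝ) : ℂ)

/-- `f ∈ D(K)` for real `f`: a difference of bounded lower semicontinuous functions. -/
def MemDKReal (f : K → ℝ) : Prop :=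
  ∃ u₁ u₂ : K → ℝ, BddLSC u₁ ∧ BddLSC u₂ ∧ ∀ x, f x = u₁ x - u₂ x

/-- Upper semicontinuous envelope `Ug(x) = limsup_{y → x} g(y)` (non-exclusive limsup). -/
noncomputable def uscEnv (g : K → EReal) : K → EReal := fun x => limsup g (𝓝 x)

/-- The transfinite oscillations `osc_β f` of a complex-valued function. -/
noncomputable def oscOrd (f : K → ℂ) (β : Ordinal) : K → EReal :=
  Ordinal.limitRecOn β (fun _ => (0 : EReal))
    (fun _ ih => uscEnv fun x =>
      limsup (fun y => ((‖f y - f x‖ : ℝ) : EReal) + ih y) (𝓝 x))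
    (fun β _ ih => uscEnv fun x => ⨆ (α : Ordinal) (h : α < β), ih α h x)

/-- The transfinite oscillations `osc_β f` of a real-valued function. -/
noncomputable def oscOrdR (f : K → ℝ) (β : Ordinal) : K → EReal :=
  Ordinal.limitRecOn β (fun _ => (0 : EReal))
    (fun _ ih => uscEnv fun x =>
      limsup (fun y => ((|f y - f x| : ℝ) : EReal) + ih y) (𝓝 x))
    (fun β _ ih => uscEnv fun x => ⨆ (α : Ordinal) (h : α < β), ih α h x)

/-- The positive transfinite oscillations `v_β f` of a real-valued function
(as `osc_β`, but with `f y - f x` in place of `|f y - f x|`). -/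
noncomputable def vOrd (f : K → ℝ) (β : Ordinal) : K → EReal :=
  Ordinal.limitRecOn β (fun _ => (0 : EReal))
    (fun _ ih => uscEnv fun x =>
      limsup (fun y => ((f y - f x : ℝ) : EReal) + ih y) (𝓝 x))
    (fun β _ ih => uscEnv fun x => ⨆ (α : Ordinal) (h : α < β), ih α h x)

/-- The `D(K)`-norm of a real function: the infimum of `sup_{x} Σ_j |φ_j x|` over all
pointwise representations `f = Σ_j φ_j` with `φ_j` continuous. -/
noncomputable def DNorm (f : K → ℝ) : ℝ :=
  sInf {M : ℝ | ∃ φ : ℕ → K → ℝ, (∀ j, Continuous (φ j)) ∧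
    (∀ x, HasSum (fun j => φ j x) (f x)) ∧
    (∀ x, Summable fun j => |φ j x|) ∧ ∀ x, (∑' j, |φ j x|) ≤ M}

end DKdefs

set_option linter.unusedSectionVars false
set_option linter.unusedVariables false
set_option linter.unnecessarySimpa false

section Base
variable {K : Type*} [MetricSpace K] [CompactSpace K]

lemma le_limsup_nhds (g : K → EReal) (x : K) : g x ≤ limsup g (𝓝 x) :=
  le_limsup_of_frequently_le
    (Filter.frequently_iff.2 fun {U} hU => ⟨x, mem_of_mem_nhds hU, le_rfl⟩)
    (Filter.isBounded_le_of_top)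

lemma limsup_le_of_ev {g : K → EReal} {l : Filter K} {c : EReal}
    (h : ∀ᶠ y in l, g y ≤ c) : limsup g l ≤ c :=
  limsup_le_of_le (Filter.isCobounded_le_of_bot) h

lemma limsup_mono' {a b : K → EReal} (l : Filter K) (h : ∀ y, a y ≤ b y) :
    limsup a l ≤ limsup b l :=
  limsup_le_limsup (Filter.Eventually.of_forall h)
    (Filter.isCobounded_le_of_bot) (Filter.isBounded_le_of_top)

lemma le_uscEnv (g : K → EReal) (x : K) : g x ≤ uscEnv g x := le_limsup_nhds g x

lemma uscEnv_mono {a b : K → EReal} (h : ∀ y, a y ≤ b y) (x : K) :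
    uscEnv a x ≤ uscEnv b x := limsup_mono' _ h

lemma uscEnv_usc (g : K → EReal) (x : K) : limsup (uscEnv g) (𝓝 x) ≤ uscEnv g x := by
  apply le_of_forall_gt_imp_ge_of_dense
  intro b hb
  obtain ⟨O, hO, hOopen, hxO⟩ := eventually_nhds_iff.1
    (eventually_lt_of_limsup_lt hb (Filter.isBounded_le_of_top))
  apply limsup_le_of_ev
  filter_upwards [hOopen.mem_nhds hxO] with y hy
  exact limsup_le_of_ev (by filter_upwards [hOopen.mem_nhds hy] with z hz using (hO z hz).le)

variable (f : K → ℝ)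

lemma oscOrdR_zero : oscOrdR f 0 = fun _ => (0 : EReal) := by
  rw [oscOrdR, Ordinal.limitRecOn_zero]

lemma oscOrdR_succ (β : Ordinal) : oscOrdR f (β + 1) =
    uscEnv (fun x => limsup (fun y => ((|f y - f x| : ℝ) : EReal) + oscOrdR f β y) (𝓝 x)) := by
  rw [oscOrdR, Ordinal.add_one_eq_succ, Ordinal.limitRecOn_succ]
  rfl

lemma oscOrdR_limit (β : Ordinal) (h : Order.IsSuccLimit β) : oscOrdR f β =
    uscEnv (fun x => ⨆ (α : Ordinal) (_ : α < β), oscOrdR f α x) := by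
  rw [oscOrdR, Ordinal.limitRecOn_limit _ _ _ _ h]
  rfl

lemma oscOrdR_nonneg (β : Ordinal) (x : K) : 0 ≤ oscOrdR f β x := by
  induction β using Ordinal.limitRecOn generalizing x with
  | zero => rw [oscOrdR_zero]
  | add_one β ih =>
    rw [oscOrdR_succ]
    refine le_trans ?_ (le_uscEnv _ x)
    refine le_trans ?_ (le_limsup_nhds _ x)
    exact add_nonneg (EReal.coe_nonneg.2 (abs_nonneg _)) (ih x)
  | limit β hβ ih =>
    rw [oscOrdR_limit f β hβ]
    refine le_trans ?_ (le_uscEnv _ x)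
    exact le_trans (ih 0 hβ.pos x) (le_iSup₂ (f := fun α (_ : α < β) => oscOrdR f α x) 0 hβ.pos)

lemma oscOrdR_le_succ (β : Ordinal) (x : K) : oscOrdR f β x ≤ oscOrdR f (β + 1) x := by
  rw [oscOrdR_succ]
  refine le_trans ?_ (le_uscEnv _ x)
  refine le_trans ?_ (le_limsup_nhds _ x)
  simp

lemma oscOrdR_mono {α β : Ordinal} (h : α ≤ β) (x : K) : oscOrdR f α x ≤ oscOrdR f β x := by
  induction β using Ordinal.limitRecOn generalizing x with
  | zero => rw [nonpos_iff_eq_zero.1 h]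
  | add_one β ih =>
    rw [Ordinal.add_one_eq_succ] at h ⊢
    rcases (Order.le_succ_iff_eq_or_le.1 h) with h' | h'
    · rw [h']
    · exact le_trans (ih h' x) (by rw [← Ordinal.add_one_eq_succ] at *; exact oscOrdR_le_succ f β x)
  | limit β hβ ih =>
    rcases eq_or_lt_of_le h with h' | h'
    · rw [h']
    · rw [oscOrdR_limit f β hβ]
      refine le_trans ?_ (le_uscEnv _ x)
      exact le_iSup₂ (f := fun γ (_ : γ < β) => oscOrdR f γ x) α h'

/-- Comparison lemma: any nonneg USC fixed point dominates all transfinite oscillations. -/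
lemma oscOrdR_le_fixed (h : K → EReal) (h0 : ∀ x, 0 ≤ h x)
    (husc : ∀ x, limsup h (𝓝 x) ≤ h x)
    (hfix : ∀ x, limsup (fun y => ((|f y - f x| : ℝ) : EReal) + h y) (𝓝 x) ≤ h x) :
    ∀ (β : Ordinal) (x : K), oscOrdR f β x ≤ h x := by
  intro β
  induction β using Ordinal.limitRecOn with
  | zero => intro x; rw [oscOrdR_zero]; exact h0 x
  | add_one β ih =>
    intro x
    rw [oscOrdR_succ]
    refine le_trans (uscEnv_mono (fun x' => ?_) x) (husc x)
    exact le_trans (limsup_mono' _ fun y => add_le_add_right (ih y) _) (hfix x')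
  | limit β hβ ih =>
    intro x
    rw [oscOrdR_limit f β hβ]
    refine le_trans (uscEnv_mono (fun x' => ?_) x) (husc x)
    exact iSup₂_le fun γ hγ => ih γ hγ x'

end Base

section Key
variable {K : Type*} [MetricSpace K] [CompactSpace K]

lemma limsup_max_le (a b : K → EReal) (l : Filter K) :
    limsup (fun y => max (a y) (b y)) l ≤ max (limsup a l) (limsup b l) := by
  apply le_of_forall_gt_imp_ge_of_dense
  intro c hc
  rw [max_lt_iff] at hc
  apply limsup_le_of_ev
  filter_upwards [eventually_lt_of_limsup_lt hc.1 (Filter.isBounded_le_of_top),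
    eventually_lt_of_limsup_lt hc.2 (Filter.isBounded_le_of_top)] with y h1 h2
  exact (max_lt h1 h2).le

lemma limsup_add_le' (a b : K → EReal) (l : Filter K) (h1 : limsup b l ≠ ⊤)
    (h2 : limsup b l ≠ ⊥) :
    limsup (fun y => a y + b y) l ≤ limsup a l + limsup b l :=
  EReal.limsup_add_le (Or.inr h1) (Or.inr h2)

lemma limsup_coe_le_of_le {g : K → ℝ} {c : ℝ} (h : ∀ y, g y ≤ c) (l : Filter K) :
    limsup (fun y => ((g y : ℝ) : EReal)) l ≤ (c : EReal) :=
  limsup_le_of_ev (Filter.Eventually.of_forall fun y => EReal.coe_le_coe_iff.2 (h y))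

lemma limsup_coe_neg_lsc {g : K → ℝ} (hg : LowerSemicontinuous g) (x : K) :
    limsup (fun y => ((-g y : ℝ) : EReal)) (𝓝 x) ≤ ((-g x : ℝ) : EReal) := by
  by_contra hcon
  push_neg at hcon
  obtain ⟨r, hr1, hr2⟩ := EReal.exists_between_coe_real hcon
  have : ∀ᶠ y in 𝓝 x, ((-g y : ℝ) : EReal) ≤ (r : EReal) := by
    filter_upwards [hg x (-r)
      (by exact_mod_cast (by linarith [EReal.coe_lt_coe_iff.1 hr1] : (-r:ℝ) < g x))] with y hy
    exact EReal.coe_le_coe_iff.2 (by linarith)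
  exact absurd (limsup_le_of_ev this) (not_le.2 hr2)

/-- The upper envelope `U(w)` as an `EReal`-valued function. -/
noncomputable def Wenv (w : K → ℝ) : K → EReal :=
  fun x => limsup (fun y => ((w y : ℝ) : EReal)) (𝓝 x)

/-- The canonical fixed point `U(w) - w`. -/
noncomputable def Hfix (w : K → ℝ) : K → EReal :=
  fun x => Wenv w x + ((-(w x) : ℝ) : EReal)

variable (w : K → ℝ)

lemma Wenv_le_of_le {M : ℝ} (hM : ∀ x, w x ≤ M) (x : K) : Wenv w x ≤ (M : EReal) :=
  limsup_coe_le_of_le hM _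

lemma coe_le_Wenv (x : K) : ((w x : ℝ) : EReal) ≤ Wenv w x :=
  le_limsup_nhds (fun y => ((w y : ℝ) : EReal)) x

lemma Wenv_usc (x : K) : limsup (Wenv w) (𝓝 x) ≤ Wenv w x :=
  uscEnv_usc (fun y => ((w y : ℝ) : EReal)) x

lemma coe_add_neg_coe (t : ℝ) : ((t : ℝ) : EReal) + ((-t : ℝ) : EReal) = 0 := by
  norm_cast; ring

lemma Hfix_nonneg (x : K) : 0 ≤ Hfix w x := by
  have := add_le_add_left (coe_le_Wenv w x) (((-(w x) : ℝ) : EReal))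
  rw [coe_add_neg_coe (w x)] at this
  exact this

lemma Hfix_usc (hwlsc : LowerSemicontinuous w) (x : K) :
    limsup (Hfix w) (𝓝 x) ≤ Hfix w x := by
  have h1 : limsup (fun y => ((-(w y) : ℝ) : EReal)) (𝓝 x) ≠ ⊤ := by
    intro htop
    have := limsup_coe_neg_lsc hwlsc x
    rw [htop] at this
    exact absurd this (by simp)
  have h2 : limsup (fun y => ((-(w y) : ℝ) : EReal)) (𝓝 x) ≠ ⊥ := by
    intro hbot
    have := le_limsup_nhds (fun y => ((-(w y) : ℝ) : EReal)) x
    rw [hbot] at this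
    simpa using this
  calc limsup (Hfix w) (𝓝 x)
      ≤ limsup (Wenv w) (𝓝 x) + limsup (fun y => ((-(w y) : ℝ) : EReal)) (𝓝 x) :=
        limsup_add_le' (Wenv w) _ _ h1 h2
    _ ≤ Wenv w x + ((-(w x) : ℝ) : EReal) :=
        add_le_add (Wenv_usc w x) (limsup_coe_neg_lsc hwlsc x)

lemma Hfix_fix (f u v : K → ℝ) (hu : LowerSemicontinuous u) (hv : LowerSemicontinuous v)
    (hu0 : ∀ x, 0 ≤ u x) (hv0 : ∀ x, 0 ≤ v x)
    (hfuv : ∀ x, f x = u x - v x) (hwuv : ∀ x, w x = u x + v x) (x : K) :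
    limsup (fun y => ((|f y - f x| : ℝ) : EReal) + Hfix w y) (𝓝 x) ≤ Hfix w x := by
  have hbr : ∀ (C : K → ℝ), LowerSemicontinuous (fun y => -(C y)) → C x = -(w x) →
      (∃ c : ℝ, ∀ y, C y ≤ c) →
      limsup (fun y => Wenv w y + ((C y : ℝ) : EReal)) (𝓝 x) ≤ Hfix w x := by
    intro C hClsc hCx hCb
    obtain ⟨c, hc⟩ := hCb
    have h1 : limsup (fun y => ((C y : ℝ) : EReal)) (𝓝 x) ≠ ⊤ := by
      intro htop
      have := limsup_coe_le_of_le hc (𝓝 x)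
      rw [htop] at this
      simpa using this
    have h2 : limsup (fun y => ((C y : ℝ) : EReal)) (𝓝 x) ≠ ⊥ := by
      intro hbot
      have := le_limsup_nhds (fun y => ((C y : ℝ) : EReal)) x
      rw [hbot] at this
      simpa using this
    calc limsup (fun y => Wenv w y + ((C y : ℝ) : EReal)) (𝓝 x)
        ≤ limsup (Wenv w) (𝓝 x) + limsup (fun y => ((C y : ℝ) : EReal)) (𝓝 x) :=
          limsup_add_le' (Wenv w) _ _ h1 h2
      _ ≤ Wenv w x + ((C x : ℝ) : EReal) := by
          refine add_le_add (Wenv_usc w x) ?_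
          have := limsup_coe_neg_lsc (g := fun y => -(C y)) hClsc x
          simpa using this
      _ = Hfix w x := by rw [hCx]; rfl
  set A : K → ℝ := fun y => -(2 * v y + f x) with hA
  set B : K → ℝ := fun y => -(2 * u y - f x) with hB
  have hAx : A x = -(w x) := by rw [hA]; simp only; rw [hfuv x, hwuv x]; ring
  have hBx : B x = -(w x) := by rw [hB]; simp only; rw [hfuv x, hwuv x]; ring
  have hAlsc : LowerSemicontinuous (fun y => -(A y)) := by
    have h2 : LowerSemicontinuous (fun y => (v y + v y) + f x) :=
      (hv.add hv).add lowerSemicontinuous_const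
    convert h2 using 2 with y
    rw [hA]; ring
  have hBlsc : LowerSemicontinuous (fun y => -(B y)) := by
    have h2 : LowerSemicontinuous (fun y => (u y + u y) + (-(f x))) :=
      (hu.add hu).add lowerSemicontinuous_const
    convert h2 using 2 with y
    rw [hB]; ring
  have hpt : ∀ y, ((|f y - f x| : ℝ) : EReal) + Hfix w y ≤
      max (Wenv w y + ((A y : ℝ) : EReal)) (Wenv w y + ((B y : ℝ) : EReal)) := by
    intro y
    have e1 : ((|f y - f x| : ℝ) : EReal) + Hfix w y
        = Wenv w y + ((|f y - f x| + -(w y) : ℝ) : EReal) := by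
      show ((|f y - f x| : ℝ) : EReal) + (Wenv w y + ((-(w y) : ℝ) : EReal)) = _
      rw [EReal.coe_add]
      abel
    rw [e1]
    have e2 : |f y - f x| + -(w y) = max (A y) (B y) := by
      rw [hA, hB]
      simp only
      rw [hfuv y, hfuv x, hwuv y]
      rcases le_total (u y - v y - (u x - v x)) 0 with h' | h'
      · rw [abs_of_nonpos h', max_eq_right (by nlinarith)]
        ring
      · rw [abs_of_nonneg h', max_eq_left (by nlinarith)]
        ring
    rw [e2]
    rcases max_choice (A y) (B y) with h' | h'
    · rw [h']; exact le_max_left _ _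
    · rw [h']; exact le_max_right _ _
  calc limsup (fun y => ((|f y - f x| : ℝ) : EReal) + Hfix w y) (𝓝 x)
      ≤ limsup (fun y => max (Wenv w y + ((A y : ℝ) : EReal))
          (Wenv w y + ((B y : ℝ) : EReal))) (𝓝 x) := limsup_mono' _ hpt
    _ ≤ max (limsup (fun y => Wenv w y + ((A y : ℝ) : EReal)) (𝓝 x))
          (limsup (fun y => Wenv w y + ((B y : ℝ) : EReal)) (𝓝 x)) := limsup_max_le _ _ _
    _ ≤ Hfix w x := by
        apply max_le
        · refine hbr A hAlsc hAx ⟨-(f x), fun y => ?_⟩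
          rw [hA]; simp only
          have := hv0 y; linarith
        · refine hbr B hBlsc hBx ⟨|f x| - f x + |f x| + f x, fun y => ?_⟩
          rw [hB]; simp only
          have := hu0 y
          have := neg_abs_le (f x)
          have := le_abs_self (f x)
          nlinarith
  
lemma key_bound (f u v : K → ℝ) (hu : LowerSemicontinuous u) (hv : LowerSemicontinuous v)
    (hu0 : ∀ x, 0 ≤ u x) (hv0 : ∀ x, 0 ≤ v x) {M : ℝ} (hM : ∀ x, u x + v x ≤ M)
    (hfuv : ∀ x, f x = u x - v x) :
    ∀ (β : Ordinal) (x : K), ((|f x| : ℝ) : EReal) + oscOrdR f β x ≤ (M : EReal) := by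
  have hcomp := oscOrdR_le_fixed f (Hfix (fun z => u z + v z))
    (Hfix_nonneg _) (Hfix_usc _ (hu.add hv))
    (Hfix_fix _ f u v hu hv hu0 hv0 hfuv (fun _ => rfl))
  intro β x
  have habsw : |f x| ≤ u x + v x := by
    rw [hfuv x]
    calc |u x - v x| ≤ |u x| + |v x| := abs_sub _ _
      _ = u x + v x := by rw [abs_of_nonneg (hu0 x), abs_of_nonneg (hv0 x)]
  calc ((|f x| : ℝ) : EReal) + oscOrdR f β x
      ≤ ((|f x| : ℝ) : EReal) + Hfix (fun z => u z + v z) x :=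
        add_le_add_right (hcomp β x) _
    _ ≤ ((u x + v x : ℝ) : EReal) + Hfix (fun z => u z + v z) x :=
        add_le_add_left (EReal.coe_le_coe_iff.2 habsw) _
    _ = Wenv (fun z => u z + v z) x
        + (((u x + v x : ℝ) : EReal) + ((-(u x + v x) : ℝ) : EReal)) := by
        show _ + (Wenv _ x + _) = _
        abel
    _ = Wenv (fun z => u z + v z) x := by rw [coe_add_neg_coe (u x + v x), add_zero]
    _ ≤ (M : EReal) := Wenv_le_of_le _ hM x

end Key

section Stab
variable {K : Type*} [MetricSpace K] [CompactSpace K]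

lemma oscOrdR_usc (f : K → ℝ) (β : Ordinal) (x : K) :
    limsup (oscOrdR f β) (𝓝 x) ≤ oscOrdR f β x := by
  rcases Ordinal.zero_or_succ_or_isSuccLimit β with h | ⟨γ, h⟩ | h
  · subst h
    rw [oscOrdR_zero]
    simp [Filter.limsup_const]
  · rw [← h, ← Ordinal.add_one_eq_succ, oscOrdR_succ]
    exact uscEnv_usc _ x
  · rw [oscOrdR_limit f β h]
    exact uscEnv_usc _ x

lemma osc_stabilizes (f : K → ℝ) :
    ∃ α : Ordinal, α < (Cardinal.aleph 1).ord ∧ oscOrdR f α = oscOrdR f (α + 1) := by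
  by_contra hcon
  push_neg at hcon
  have hBc : (TopologicalSpace.countableBasis K).Countable :=
    TopologicalSpace.countable_countableBasis K
  haveI : Countable (TopologicalSpace.countableBasis K) := hBc.to_subtype
  have hch : ∀ α : Ordinal, α < (Cardinal.aleph 1).ord →
      ∃ p : (TopologicalSpace.countableBasis K) × ℚ,
        (∀ y ∈ (p.1 : Set K), oscOrdR f α y < ((p.2 : ℝ) : EReal)) ∧
        ∃ x ∈ (p.1 : Set K), ((p.2 : ℝ) : EReal) < oscOrdR f (α + 1) x := by
    intro α hα
    have : ∃ x, oscOrdR f α x ≠ oscOrdR f (α + 1) x := by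
      by_contra h
      push_neg at h
      exact hcon α hα (funext h)
    obtain ⟨x, hx⟩ := this
    have hlt : oscOrdR f α x < oscOrdR f (α + 1) x :=
      lt_of_le_of_ne (oscOrdR_le_succ f α x) hx
    obtain ⟨q, hq1, hq2⟩ := EReal.exists_rat_btwn_of_lt hlt
    have hopen : IsOpen {y | oscOrdR f α y < ((q : ℝ) : EReal)} := by
      rw [isOpen_iff_mem_nhds]
      intro z hz
      exact eventually_lt_of_limsup_lt (lt_of_le_of_lt (oscOrdR_usc f α z) hz)
        (Filter.isBounded_le_of_top)
    obtain ⟨V, hVB, hxV, hVsub⟩ :=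
      (TopologicalSpace.isBasis_countableBasis K).exists_subset_of_mem_open hq1 hopen
    exact ⟨(⟨V, hVB⟩, q), fun y hy => hVsub hy, x, hxV, hq2⟩
  choose p hp1 hp2 using hch
  have hinj : Function.Injective
      (fun a : (Set.Iio ((Cardinal.aleph 1).ord)) => p a.1 a.2) := by
    intro a b hab
    have hab' : p a.1 a.2 = p b.1 b.2 := hab
    by_contra hne
    have hne' : a.1 ≠ b.1 := fun h => hne (Subtype.ext h)
    rcases hne'.lt_or_gt with h | h
    · obtain ⟨x, hxV, hx⟩ := hp2 a.1 a.2
      have hV : ((p a.1 a.2).1 : Set K) = ((p b.1 b.2).1 : Set K) :=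
        congrArg (fun z : (TopologicalSpace.countableBasis K) × ℚ => ((z.1 : Set K))) hab'
      have hq : (p a.1 a.2).2 = (p b.1 b.2).2 := congrArg Prod.snd hab'
      have h1 := hp1 b.1 b.2 x (hV ▸ hxV)
      have h2 : oscOrdR f (a.1 + 1) x ≤ oscOrdR f b.1 x := by
        apply oscOrdR_mono
        rw [Ordinal.add_one_eq_succ]
        exact Order.succ_le_of_lt h
      rw [hq] at hx
      exact absurd (lt_of_lt_of_le hx h2) (not_lt.2 h1.le)
    · obtain ⟨x, hxV, hx⟩ := hp2 b.1 b.2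
      have hV : ((p b.1 b.2).1 : Set K) = ((p a.1 a.2).1 : Set K) :=
        (congrArg (fun z : (TopologicalSpace.countableBasis K) × ℚ => ((z.1 : Set K))) hab').symm
      have hq : (p b.1 b.2).2 = (p a.1 a.2).2 := (congrArg Prod.snd hab').symm
      have h1 := hp1 a.1 a.2 x (hV ▸ hxV)
      have h2 : oscOrdR f (b.1 + 1) x ≤ oscOrdR f a.1 x := by
        apply oscOrdR_mono
        rw [Ordinal.add_one_eq_succ]
        exact Order.succ_le_of_lt h
      rw [hq] at hx
      exact absurd (lt_of_lt_of_le hx h2) (not_lt.2 h1.le)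
  haveI hcnt : Countable (Set.Iio ((Cardinal.aleph 1).ord)) := hinj.countable
  have hmk : Cardinal.mk (Set.Iio ((Cardinal.aleph 1).ord)) ≤ Cardinal.aleph0 :=
    Cardinal.mk_le_aleph0
  rw [Ordinal.mk_Iio_ordinal, Cardinal.card_ord, Cardinal.lift_le_aleph0] at hmk
  exact absurd hmk (not_le.2 Cardinal.aleph0_lt_aleph_one)

end Stab

section Approx
variable {K : Type*} [MetricSpace K] [CompactSpace K] [Nonempty K]

/-- Moreau–Yosida approximation: a bounded nonneg LSC function is the pointwise sum of a
series of nonneg continuous functions. -/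
lemma lsc_hasSum_series (u : K → ℝ) (hu : LowerSemicontinuous u) (hu0 : ∀ x, 0 ≤ u x) :
    ∃ ψ : ℕ → K → ℝ, (∀ n, Continuous (ψ n)) ∧ (∀ n x, 0 ≤ ψ n x) ∧
      ∀ x, HasSum (fun n => ψ n x) (u x) := by
  set c : ℕ → K → ℝ := fun n x => ⨅ y : K, (u y + n * dist x y) with hc
  have hbdd : ∀ (n : ℕ) (x : K), BddBelow (Set.range fun y : K => u y + (n:ℝ) * dist x y) := by
    intro n x
    refine ⟨0, fun t ht => ?_⟩
    obtain ⟨y, rfl⟩ := ht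
    exact add_nonneg (hu0 y) (by positivity)
  have hc0 : ∀ n x, 0 ≤ c n x :=
    fun n x => le_ciInf fun y => add_nonneg (hu0 y) (by positivity)
  have hcle : ∀ n x, c n x ≤ u x := by
    intro n x
    have := ciInf_le (hbdd n x) x
    simpa using this
  have hlip : ∀ (n : ℕ) (x x' : K), c n x ≤ c n x' + n * dist x x' := by
    intro n x x'
    have : c n x - n * dist x x' ≤ c n x' := by
      refine le_ciInf fun y => ?_
      have h1 : c n x ≤ u y + n * dist x y := ciInf_le (hbdd n x) y
      have h2 : dist x y ≤ dist x x' + dist x' y := dist_triangle x x' y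
      have hn : (0:ℝ) ≤ n := Nat.cast_nonneg n
      nlinarith
    linarith
  have hcont : ∀ n, Continuous (c n) := by
    intro n
    rw [Metric.continuous_iff]
    intro b ε hε
    refine ⟨ε / (n + 1), by positivity, fun a hab => ?_⟩
    rw [Real.dist_eq, abs_sub_lt_iff]
    have h1 := hlip n a b
    have h2 := hlip n b a
    have hd : dist a b < ε / (n+1) := hab
    have hd' : dist b a = dist a b := dist_comm b a
    have hn : (0:ℝ) ≤ n := Nat.cast_nonneg n
    have hdn : (n:ℝ) * dist a b < ε := by
      calc (n:ℝ) * dist a b ≤ (n+1) * dist a b := by nlinarith [dist_nonneg (x := a) (y := b)]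
        _ < (n+1) * (ε / (n+1)) := by
            apply mul_lt_mul_of_pos_left hd
            positivity
        _ = ε := by field_simp
    constructor <;> nlinarith
  have hmono : ∀ x, Monotone fun n => c n x := by
    intro x
    refine monotone_nat_of_le_succ fun n => ?_
    refine le_ciInf fun y => ?_
    have h1 : c n x ≤ u y + n * dist x y := ciInf_le (hbdd n x) y
    have : (n:ℝ) * dist x y ≤ (n+1 : ℕ) * dist x y := by
      push_cast
      nlinarith [dist_nonneg (x := x) (y := y)]
    linarith
  have htend : ∀ x, Tendsto (fun n => c n x) atTop (𝓝 (u x)) := by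
    intro x
    have hbd : BddAbove (Set.range fun n => c n x) := ⟨u x, fun t ht => by
      obtain ⟨n, rfl⟩ := ht; exact hcle n x⟩
    have h := tendsto_atTop_ciSup (hmono x) hbd
    convert h using 2
    have hSle : (⨆ n, c n x) ≤ u x := ciSup_le fun n => hcle n x
    refine le_antisymm ?_ hSle
    by_contra hcon
    push_neg at hcon
    set S := ⨆ n, c n x
    have hS2 : (S + u x)/2 < u x := by
      dsimp only [S]
      linarith
    obtain ⟨δ, hδ, hball⟩ := Metric.eventually_nhds_iff.1 (hu x _ hS2)
    obtain ⟨n, hn⟩ := exists_nat_ge ((S + u x)/2 / δ)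
    have hkey : (S + u x)/2 ≤ c n x := by
      refine le_ciInf fun y => ?_
      rcases lt_or_ge (dist y x) δ with h' | h'
      · have := hball h'
        have := hu0 y
        have hn0 : (0:ℝ) ≤ n := Nat.cast_nonneg n
        nlinarith [dist_nonneg (x := x) (y := y)]
      · have h0 : (0:ℝ) ≤ (S + u x)/2 := by
          have := hc0 0 x
          have hS0 : 0 ≤ S := le_ciSup_of_le hbd 0 (hc0 0 x)
          have := hu0 x
          linarith
        have : (S + u x)/2 ≤ (n:ℝ) * dist x y := by
          rw [div_le_iff₀ hδ] at hn
          calc (S + u x)/2 ≤ n * δ := by linarith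
            _ ≤ n * dist x y := by
                have hn0 : (0:ℝ) ≤ n := Nat.cast_nonneg n
                rw [dist_comm] at h'
                nlinarith
        have := hu0 y
        linarith
      
    have : (S + u x)/2 ≤ S := le_ciSup_of_le hbd n hkey
    linarith
  set d : ℕ → K → ℝ := fun n x => if n = 0 then 0 else c (n-1) x with hd
  refine ⟨fun n x => d (n+1) x - d n x, ?_, ?_, ?_⟩
  · intro n
    cases n with
    | zero => simpa [hd] using (hcont 0)
    | succ m => simp [hd]; exact (hcont (m+1)).sub (hcont m)
  · intro n x
    cases n with
    | zero => simpa [hd] using hc0 0 x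
    | succ m =>
      simp only [hd]
      simp only [Nat.add_sub_cancel, if_neg (Nat.succ_ne_zero _), if_neg (Nat.succ_ne_zero _)]
      linarith [hmono x (Nat.le_succ m)]
  · intro x
    have hps : ∀ n, ∑ i ∈ Finset.range n, (d (i+1) x - d i x) = d n x := by
      intro n
      rw [Finset.sum_range_sub (fun i => d i x)]
      simp [hd]
    rw [hasSum_iff_tendsto_nat_of_nonneg]
    · simp_rw [hps]
      rw [← Filter.tendsto_add_atTop_iff_nat 1]
      simp only [hd, Nat.add_sub_cancel, if_neg (Nat.succ_ne_zero _)]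
      exact htend x
    · intro i
      cases i with
      | zero => simpa [hd] using hc0 0 x
      | succ m =>
        simp only [hd, Nat.add_sub_cancel, if_neg (Nat.succ_ne_zero _)]
        linarith [hmono x (Nat.le_succ m)]

end Approx

section DN
set_option maxHeartbeats 2000000
variable {K : Type*} [MetricSpace K] [CompactSpace K]

/-- Build an interleaved continuous series representation from two LSC nonneg functions. -/
lemma exists_series (f u v : K → ℝ) [Nonempty K]
    (hu : LowerSemicontinuous u) (hv : LowerSemicontinuous v)
    (hu0 : ∀ x, 0 ≤ u x) (hv0 : ∀ x, 0 ≤ v x) (hfuv : ∀ x, f x = u x - v x)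
    {lam : ℝ} (hlam : ∀ x, u x + v x ≤ lam) :
    ∃ φ : ℕ → K → ℝ, (∀ j, Continuous (φ j)) ∧ (∀ x, HasSum (fun j => φ j x) (f x)) ∧
      (∀ x, Summable fun j => |φ j x|) ∧ ∀ x, (∑' j, |φ j x|) ≤ lam := by
  obtain ⟨ψ, hψc, hψ0, hψs⟩ := lsc_hasSum_series u hu hu0
  obtain ⟨χ, hχc, hχ0, hχs⟩ := lsc_hasSum_series v hv hv0
  set φ : ℕ → K → ℝ := fun j x => if j % 2 = 0 then ψ (j / 2) x else -(χ (j / 2) x) with hφ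
  have heven : ∀ x k, φ (2 * k) x = ψ k x := by
    intro x k
    have h1 : (2 * k) % 2 = 0 := by omega
    have h2 : (2 * k) / 2 = k := by omega
    simp [hφ, h1, h2]
  have hodd : ∀ x k, φ (2 * k + 1) x = -(χ k x) := by
    intro x k
    have h1 : ¬((2 * k + 1) % 2 = 0) := by omega
    have h2 : (2 * k + 1) / 2 = k := by omega
    simp [hφ, h1, h2]
  have habse : ∀ x k, |φ (2 * k) x| = ψ k x := fun x k => by
    rw [heven x k]; exact abs_of_nonneg (hψ0 k x)
  have habso : ∀ x k, |φ (2 * k + 1) x| = χ k x := fun x k => by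
    rw [hodd x k]; rw [abs_neg]; exact abs_of_nonneg (hχ0 k x)
  have habs : ∀ x, HasSum (fun j => |φ j x|) (u x + v x) := by
    intro x
    have he : HasSum (fun k => |φ (2 * k) x|) (u x) := by
      have : (fun k => |φ (2 * k) x|) = fun k => ψ k x := funext fun k => habse x k
      rw [this]; exact hψs x
    have ho : HasSum (fun k => |φ (2 * k + 1) x|) (v x) := by
      have : (fun k => |φ (2 * k + 1) x|) = fun k => χ k x := funext fun k => habso x k
      rw [this]; exact hχs x
    exact HasSum.even_add_odd (f := fun j => |φ j x|) he ho
  refine ⟨φ, ?_, ?_, fun x => (habs x).summable, fun x => ?_⟩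
  · intro j
    by_cases h : j % 2 = 0
    · simp only [hφ, if_pos h]
      exact hψc _
    · simp only [hφ, if_neg h]
      exact (hχc _).neg
  · intro x
    have he : HasSum (fun k => φ (2 * k) x) (u x) := by
      have : (fun k => φ (2 * k) x) = fun k => ψ k x := funext fun k => heven x k
      rw [this]; exact hψs x
    have ho : HasSum (fun k => φ (2 * k + 1) x) (-(v x)) := by
      have : (fun k => φ (2 * k + 1) x) = fun k => -(χ k x) := funext fun k => hodd x k
      rw [this]; exact (hχs x).neg
    have := HasSum.even_add_odd (f := fun j => φ j x) he ho
    rw [hfuv x, sub_eq_add_neg]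
    exact this
  · rw [(habs x).tsum_eq]
    exact hlam x

/-- Any admissible series bound dominates `|f| + osc_β f` pointwise. -/
lemma series_dominates (f : K → ℝ) {M : ℝ} (φ : ℕ → K → ℝ) (hφc : ∀ j, Continuous (φ j))
    (hsum : ∀ x, HasSum (fun j => φ j x) (f x)) (habs : ∀ x, Summable fun j => |φ j x|)
    (hbound : ∀ x, (∑' j, |φ j x|) ≤ M) (β : Ordinal) (x : K) :
    ((|f x| : ℝ) : EReal) + oscOrdR f β x ≤ (M : EReal) := by
  have hsu : ∀ z, Summable (fun j => max (φ j z) 0) := fun z =>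
    Summable.of_nonneg_of_le (fun j => le_max_right _ _)
      (fun j => max_le (le_abs_self _) (abs_nonneg _)) (habs z)
  have hsv : ∀ z, Summable (fun j => max (-(φ j z)) 0) := fun z =>
    Summable.of_nonneg_of_le (fun j => le_max_right _ _)
      (fun j => max_le (neg_le_abs _) (abs_nonneg _)) (habs z)
  have hlsc : ∀ (g : ℕ → K → ℝ), (∀ j, Continuous (g j)) → (∀ j z, 0 ≤ g j z) →
      (∀ z, Summable (fun j => g j z)) → LowerSemicontinuous (fun z => ∑' j, g j z) := by
    intro g hgc hg0 hgs x c hc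
    obtain ⟨s, hs⟩ := (((hgs x).hasSum).eventually (eventually_gt_nhds hc)).exists
    have hcont : Continuous (fun z => ∑ j ∈ s, g j z) :=
      continuous_finset_sum s fun j _ => hgc j
    filter_upwards [(hcont.tendsto x).eventually (eventually_gt_nhds hs)] with y hy
    exact lt_of_lt_of_le hy (Summable.sum_le_tsum s (fun j _ => hg0 j y) (hgs y))
  have hdec : ∀ z, f z = (∑' j, max (φ j z) 0) - (∑' j, max (-(φ j z)) 0) := by
    intro z
    rw [← Summable.tsum_sub (hsu z) (hsv z)]
    rw [← (hsum z).tsum_eq]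
    congr 1 with j
    rcases le_total (φ j z) 0 with h | h
    · rw [max_eq_right h, max_eq_left (by linarith)]
      ring
    · rw [max_eq_left h, max_eq_right (by linarith)]
      ring
  have hadd : ∀ z, (∑' j, max (φ j z) 0) + (∑' j, max (-(φ j z)) 0) ≤ M := by
    intro z
    rw [← Summable.tsum_add (hsu z) (hsv z)]
    refine le_trans (le_of_eq ?_) (hbound z)
    congr 1 with j
    rcases le_total (φ j z) 0 with h | h
    · rw [max_eq_right h, max_eq_left (by linarith), abs_of_nonpos h]
      ring
    · rw [max_eq_left h, max_eq_right (by linarith), abs_of_nonneg h]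
      ring
  exact key_bound f _ _
    (hlsc _ (fun j => (hφc j).max continuous_const) (fun j z => le_max_right _ _) hsu)
    (hlsc _ (fun j => (hφc j).neg.max continuous_const) (fun j z => le_max_right _ _) hsv)
    (fun z => tsum_nonneg fun j => le_max_right _ _)
    (fun z => tsum_nonneg fun j => le_max_right _ _)
    hadd hdec β x

end DN


/-- For bounded real `f ∈ D(K)`: there is a countable ordinal `α` with
`osc_α f = osc_{α+1} f` (and `osc_α f` real-valued); setting
`λ = ‖|f| + osc_α f‖_∞`, `u = (λ - osc_α f + f)/2`, `v = (λ - osc_α f - f)/2`,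
the functions `u, v` are nonnegative lower semicontinuous with `f = u - v` and
`‖f‖_D = λ = ‖u + v‖_∞`. -/
theorem dnorm_attained {K : Type*} [MetricSpace K] [CompactSpace K]
    (f : K → ℝ) (hbdd : ∃ M : ℝ, ∀ x, |f x| ≤ M) (hf : MemDKReal f) :
    ∃ α : Ordinal, α < (Cardinal.aleph 1).ord ∧
      oscOrdR f α = oscOrdR f (α + 1) ∧
      ∃ g : K → ℝ, (∀ x, oscOrdR f α x = ((g x : ℝ) : EReal)) ∧
        ∃ lam : ℝ, lam = (⨆ x : K, (|f x| + g x)) ∧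
          (∀ x, 0 ≤ (lam - g x + f x) / 2) ∧
          LowerSemicontinuous (fun x => (lam - g x + f x) / 2) ∧
          (∀ x, 0 ≤ (lam - g x - f x) / 2) ∧
          LowerSemicontinuous (fun x => (lam - g x - f x) / 2) ∧
          (∀ x, f x = (lam - g x + f x) / 2 - (lam - g x - f x) / 2) ∧
          DNorm f = lam ∧
          lam = ⨆ x : K, |(lam - g x + f x) / 2 + (lam - g x - f x) / 2| := by
  classical
  rcases isEmpty_or_nonempty K with hK | hK
  · -- trivial empty case
    haveI := hK
    have hzero : (0 : ℝ) = ⨆ x : K, (|f x| + (0:ℝ)) := by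
      rw [iSup_of_empty', Real.sSup_empty]
    refine ⟨0, ?_, ?_, fun _ => 0, fun x => isEmptyElim x, 0, hzero, fun x => isEmptyElim x,
      fun x => isEmptyElim x, fun x => isEmptyElim x, fun x => isEmptyElim x,
      fun x => isEmptyElim x, ?_, ?_⟩
    · calc (0 : Ordinal) = (0 : Cardinal).ord := Cardinal.ord_zero.symm
        _ < (Cardinal.aleph 1).ord := Cardinal.ord_lt_ord.2
            (lt_of_le_of_lt zero_le Cardinal.aleph0_lt_aleph_one)
    · funext x; exact isEmptyElim x
    · have hnb : ¬ BddBelow {M : ℝ | ∃ φ : ℕ → K → ℝ, (∀ j, Continuous (φ j)) ∧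
          (∀ x, HasSum (fun j => φ j x) (f x)) ∧
          (∀ x, Summable fun j => |φ j x|) ∧ ∀ x, (∑' j, |φ j x|) ≤ M} := by
        rintro ⟨b, hb⟩
        have hmem : (b - 1) ∈ {M : ℝ | ∃ φ : ℕ → K → ℝ, (∀ j, Continuous (φ j)) ∧
            (∀ x, HasSum (fun j => φ j x) (f x)) ∧
            (∀ x, Summable fun j => |φ j x|) ∧ ∀ x, (∑' j, |φ j x|) ≤ M} :=
          ⟨fun _ _ => 0, fun _ => continuous_const, fun x => isEmptyElim x,
            fun x => isEmptyElim x, fun x => isEmptyElim x⟩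
        have := hb hmem
        linarith
      rw [DNorm, Real.sInf_of_not_bddBelow hnb]
    · rw [iSup_of_empty', Real.sSup_empty]
  -- main case
  obtain ⟨Mf, hMf⟩ := hbdd
  obtain ⟨u₁, u₂, ⟨hu₁l, C₁, hC₁⟩, ⟨hu₂l, C₂, hC₂⟩, hfd⟩ := hf
  set M₀ : ℝ := 3 * (C₁ + C₂) with hM₀
  have hC₁0 : 0 ≤ C₁ := le_trans (abs_nonneg _) (hC₁ (Classical.arbitrary K))
  have hC₂0 : 0 ≤ C₂ := le_trans (abs_nonneg _) (hC₂ (Classical.arbitrary K))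
  have hkey : ∀ (β : Ordinal) (x : K),
      ((|f x| : ℝ) : EReal) + oscOrdR f β x ≤ (M₀ : EReal) := by
    apply key_bound f (fun x => u₁ x + (C₁ + C₂)) (fun x => u₂ x + (C₁ + C₂))
      (hu₁l.add lowerSemicontinuous_const) (hu₂l.add lowerSemicontinuous_const)
    · intro x
      have := abs_le.1 (hC₁ x)
      linarith
    · intro x
      have := abs_le.1 (hC₂ x)
      linarith
    · intro x
      have h1 := abs_le.1 (hC₁ x)
      have h2 := abs_le.1 (hC₂ x)
      rw [hM₀]
      linarith
    · intro x
      rw [hfd x]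
      ring
  have hoscbd : ∀ (β : Ordinal) (x : K), oscOrdR f β x ≤ (M₀ : EReal) := by
    intro β x
    refine le_trans ?_ (hkey β x)
    exact le_add_of_nonneg_left (EReal.coe_nonneg.2 (abs_nonneg _))
  obtain ⟨α, hα, hstab⟩ := osc_stabilizes f
  have hnt : ∀ x, oscOrdR f α x ≠ ⊤ := by
    intro x h
    have := hoscbd α x
    rw [h] at this
    simpa using this
  have hnb : ∀ x, oscOrdR f α x ≠ ⊥ := by
    intro x h
    have := oscOrdR_nonneg f α x
    rw [h] at this
    simpa using this
  set g : K → ℝ := fun x => (oscOrdR f α x).toReal with hgdef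
  have hg : ∀ x, oscOrdR f α x = ((g x : ℝ) : EReal) :=
    fun x => (EReal.coe_toReal (hnt x) (hnb x)).symm
  have hg0 : ∀ x, 0 ≤ g x := by
    intro x
    have := oscOrdR_nonneg f α x
    rw [hg x] at this
    exact_mod_cast this
  have hgle : ∀ x, |f x| + g x ≤ M₀ := by
    intro x
    have := hkey α x
    rw [hg x, ← EReal.coe_add] at this
    exact_mod_cast this
  have hbddA : BddAbove (Set.range fun x => |f x| + g x) := by
    refine ⟨M₀, ?_⟩
    rintro t ⟨x, rfl⟩
    exact hgle x
  set lam : ℝ := ⨆ x : K, (|f x| + g x) with hlam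
  have hlamge : ∀ x, |f x| + g x ≤ lam := fun x => le_ciSup hbddA x
  -- the fixed point inequality
  have hfixE : ∀ x, limsup (fun y => ((|f y - f x| : ℝ) : EReal) + oscOrdR f α y) (𝓝 x)
      ≤ oscOrdR f α x := by
    intro x
    calc limsup (fun y => ((|f y - f x| : ℝ) : EReal) + oscOrdR f α y) (𝓝 x)
        ≤ oscOrdR f (α + 1) x := by
          rw [oscOrdR_succ f α]
          exact le_uscEnv (fun z => limsup
            (fun y => ((|f y - f z| : ℝ) : EReal) + oscOrdR f α y) (𝓝 z)) x
      _ = oscOrdR f α x := by rw [hstab]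
  have hfixR : ∀ x, limsup (fun y => ((|f y - f x| + g y : ℝ) : EReal)) (𝓝 x)
      ≤ ((g x : ℝ) : EReal) := by
    intro x
    have heq : (fun y => ((|f y - f x| + g y : ℝ) : EReal))
        = fun y => ((|f y - f x| : ℝ) : EReal) + oscOrdR f α y := by
      funext y
      rw [hg y, ← EReal.coe_add]
    rw [heq, ← hg x]
    exact hfixE x
  have hev : ∀ x, ∀ ε : ℝ, 0 < ε → ∀ᶠ y in 𝓝 x, |f y - f x| + g y < g x + ε := by
    intro x ε hε
    have h2 : limsup (fun y => ((|f y - f x| + g y : ℝ) : EReal)) (𝓝 x)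
        < ((g x + ε : ℝ) : EReal) :=
      lt_of_le_of_lt (hfixR x) (by exact_mod_cast (lt_add_of_pos_right (g x) hε))
    filter_upwards [eventually_lt_of_limsup_lt h2 (Filter.isBounded_le_of_top)] with y hy
    exact_mod_cast hy
  -- usc of g
  have huscg : ∀ x, limsup (fun y => ((g y : ℝ) : EReal)) (𝓝 x) ≤ ((g x : ℝ) : EReal) := by
    intro x
    have h1 := oscOrdR_usc f α x
    have heq : (fun y => ((g y : ℝ) : EReal)) = oscOrdR f α := by
      funext y
      rw [hg y]
    rw [heq, ← hg x]
    exact h1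
  -- lower semicontinuity of u and v
  have hlscu : LowerSemicontinuous (fun x => (lam - g x + f x) / 2) := by
    intro x c hc
    have hε : (0:ℝ) < 2 * ((lam - g x + f x) / 2 - c) := by linarith
    filter_upwards [hev x _ hε] with y hy
    have h3 : f x - f y ≤ |f y - f x| := by
      rw [abs_sub_comm]
      exact le_abs_self _
    have h4 : f x - f y + g y < g x + 2 * ((lam - g x + f x) / 2 - c) := by linarith
    linarith
  have hlscv : LowerSemicontinuous (fun x => (lam - g x - f x) / 2) := by
    intro x c hc
    have hε : (0:ℝ) < 2 * ((lam - g x - f x) / 2 - c) := by linarith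
    filter_upwards [hev x _ hε] with y hy
    have h3 : f y - f x ≤ |f y - f x| := le_abs_self _
    have h4 : f y - f x + g y < g x + 2 * ((lam - g x - f x) / 2 - c) := by linarith
    linarith
  have hu0 : ∀ x, 0 ≤ (lam - g x + f x) / 2 := by
    intro x
    have h1 := hlamge x
    have h2 := neg_abs_le (f x)
    linarith
  have hv0 : ∀ x, 0 ≤ (lam - g x - f x) / 2 := by
    intro x
    have h1 := hlamge x
    have h2 := le_abs_self (f x)
    linarith
  -- DNorm f = lam
  have hlamS : lam ∈ {M : ℝ | ∃ φ : ℕ → K → ℝ, (∀ j, Continuous (φ j)) ∧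
      (∀ x, HasSum (fun j => φ j x) (f x)) ∧
      (∀ x, Summable fun j => |φ j x|) ∧ ∀ x, (∑' j, |φ j x|) ≤ M} := by
    obtain ⟨φ, h1, h2, h3, h4⟩ := exists_series f
      (fun x => (lam - g x + f x) / 2) (fun x => (lam - g x - f x) / 2)
      hlscu hlscv hu0 hv0 (fun x => by ring)
      (lam := lam) (fun x => by have := hg0 x; nlinarith [hg0 x])
    exact ⟨φ, h1, h2, h3, h4⟩
  have hSge : ∀ M ∈ {M : ℝ | ∃ φ : ℕ → K → ℝ, (∀ j, Continuous (φ j)) ∧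
      (∀ x, HasSum (fun j => φ j x) (f x)) ∧
      (∀ x, Summable fun j => |φ j x|) ∧ ∀ x, (∑' j, |φ j x|) ≤ M}, lam ≤ M := by
    rintro M ⟨φ, hc, hs, ha, hb⟩
    refine ciSup_le fun x => ?_
    have := series_dominates f φ hc hs ha hb α x
    rw [hg x, ← EReal.coe_add] at this
    exact_mod_cast this
  have hDN : DNorm f = lam := by
    rw [DNorm]
    apply le_antisymm
    · apply csInf_le
      · refine ⟨0, ?_⟩
        rintro M ⟨φ, hc, hs, ha, hb⟩
        exact le_trans (tsum_nonneg fun j => abs_nonneg _) (hb (Classical.arbitrary K))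
      · exact hlamS
    · exact le_csInf ⟨lam, hlamS⟩ hSge
  -- inf g = 0
  have hbddg : BddBelow (Set.range g) := ⟨0, by rintro t ⟨x, rfl⟩; exact hg0 x⟩
  have hm0 : (⨅ x, g x) = 0 := by
    set m : ℝ := ⨅ x, g x with hm
    have hm1 : 0 ≤ m := le_ciInf hg0
    have hmle : ∀ x, m ≤ g x := fun x => ciInf_le hbddg x
    have hcomp := oscOrdR_le_fixed f (fun x => ((g x - m : ℝ) : EReal))
      (fun x => EReal.coe_nonneg.2 (by linarith [hmle x]))
      (fun x => ?_) (fun x => ?_) α (Classical.arbitrary K)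
    · rw [hg (Classical.arbitrary K)] at hcomp
      have : g (Classical.arbitrary K) ≤ g (Classical.arbitrary K) - m := by exact_mod_cast hcomp
      linarith
    · -- usc of g - m
      have heq : (fun y => ((g y - m : ℝ) : EReal))
          = fun y => ((g y : ℝ) : EReal) + ((-m : ℝ) : EReal) := by
        funext y
        rw [show g y - m = g y + -m from by ring, EReal.coe_add]
      rw [heq]
      have hconst : limsup (fun _ : K => ((-m : ℝ) : EReal)) (𝓝 x) = ((-m : ℝ) : EReal) :=
        limsup_const _
      calc limsup (fun y => ((g y : ℝ) : EReal) + ((-m : ℝ) : EReal)) (𝓝 x)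
          ≤ limsup (fun y => ((g y : ℝ) : EReal)) (𝓝 x)
            + limsup (fun _ : K => ((-m : ℝ) : EReal)) (𝓝 x) := by
            apply limsup_add_le' _ _ _ <;> rw [hconst] <;> simp
        _ ≤ ((g x : ℝ) : EReal) + ((-m : ℝ) : EReal) :=
            add_le_add (huscg x) (le_of_eq hconst)
        _ = ((g x - m : ℝ) : EReal) := by
            rw [show g x - m = g x + -m from by ring, EReal.coe_add]
    · -- fixed point for g - m
      have heq : (fun y => ((|f y - f x| : ℝ) : EReal) + ((g y - m : ℝ) : EReal))
          = fun y => ((|f y - f x| + g y : ℝ) : EReal) + ((-m : ℝ) : EReal) := by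
        funext y
        rw [show g y - m = g y + -m from by ring, EReal.coe_add, EReal.coe_add, ← add_assoc]
      rw [heq]
      have hconst : limsup (fun _ : K => ((-m : ℝ) : EReal)) (𝓝 x) = ((-m : ℝ) : EReal) :=
        limsup_const _
      calc limsup (fun y => ((|f y - f x| + g y : ℝ) : EReal) + ((-m : ℝ) : EReal)) (𝓝 x)
          ≤ limsup (fun y => ((|f y - f x| + g y : ℝ) : EReal)) (𝓝 x)
            + limsup (fun _ : K => ((-m : ℝ) : EReal)) (𝓝 x) := by
            apply limsup_add_le' _ _ _ <;> rw [hconst] <;> simp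
        _ ≤ ((g x : ℝ) : EReal) + ((-m : ℝ) : EReal) :=
            add_le_add (hfixR x) (le_of_eq hconst)
        _ = ((g x - m : ℝ) : EReal) := by
            rw [show g x - m = g x + -m from by ring, EReal.coe_add]
  -- final identity
  have hfinal : lam = ⨆ x : K, |(lam - g x + f x) / 2 + (lam - g x - f x) / 2| := by
    have heq : (fun x => |(lam - g x + f x) / 2 + (lam - g x - f x) / 2|)
        = fun x => lam - g x := by
      funext x
      rw [show (lam - g x + f x) / 2 + (lam - g x - f x) / 2 = lam - g x by ring]
      refine abs_of_nonneg ?_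
      have h1 := hlamge x
      have h2 := abs_nonneg (f x)
      linarith
    rw [heq]
    have hbdd2 : BddAbove (Set.range fun x => lam - g x) := by
      refine ⟨lam, ?_⟩
      rintro t ⟨x, rfl⟩
      have := hg0 x
      show lam - g x ≤ lam
      linarith
    apply le_antisymm
    · by_contra hcon
      push_neg at hcon
      have hlt : (⨅ x, g x) < lam - (⨆ x : K, (lam - g x)) := by
        rw [hm0]
        linarith
      obtain ⟨x, hx⟩ := exists_lt_of_ciInf_lt hlt
      have h5 : lam - g x ≤ ⨆ x : K, (lam - g x) := le_ciSup hbdd2 x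
      linarith
    · refine ciSup_le fun x => ?_
      have := hg0 x
      show lam - g x ≤ lam
      linarith
  exact ⟨α, hα, hstab, g, hg, lam, rfl, hu0, hlscu, hv0, hlscv, fun x => by ring, hDN, hfinal⟩
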